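/- (Sufficiency implies that the induced statistical morphism is a monomorphism.) Let X and Y be measurable spaces, T : X → Y measurable, and M a set of probability measures on X. Suppose T is sufficient for M in the following sense: for every measurable set A ⊆ X there exists a measurable function h_A : Y → ℝ such that for every P ∈ M, the function h_A ∘ T is a version of the conditional expectation of the indicator of A given the σ-algebra generated by T, i.e. h_A ∘ T =ᵐ[P] P[Set.indicator A (fun _ => (1 : ℝ)) | MeasurableSpace.comap T]. Then the pushforward map is injective on M: for all P, Q ∈ M, Measure.map T P = Measure.map T Q implies P = Q. -/

import Mathlib

open MeasureTheory

/-- Sufficiency implies the induced statistical morphism is a monomorphism: if for every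
measurable `A ⊆ X` there is a measurable `h_A : Y → ℝ` such that for every `P ∈ M` the
function `h_A ∘ T` is a version of the conditional expectation of the indicator of `A`
given `σ(T)`, then the pushforward map `P ↦ T_*P` is injective on `M`. -/
theorem sufficient_implies_pushforward_injective
    {X Y : Type*} [MeasurableSpace X] [MeasurableSpace Y]
    (T : X → Y) (hT : Measurable T)
    (M : Set (Measure X)) (hM : ∀ P ∈ M, IsProbabilityMeasure P)
    (hsuff : ∀ A : Set X, MeasurableSet A → ∃ h : Y → ℝ, Measurable h ∧
      ∀ P ∈ M, (h ∘ T) =ᵐ[P]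
        P[A.indicator (fun _ => (1 : ℝ)) | MeasurableSpace.comap T ‹MeasurableSpace Y›]) :
    ∀ P ∈ M, ∀ Q ∈ M, Measure.map T P = Measure.map T Q → P = Q := by
  intro P hP Q hQ hmap
  have hPprob := hM P hP
  have hQprob := hM Q hQ
  ext A hA
  obtain ⟨h, hmeas, hh⟩ := hsuff A hA
  have key : ∀ R : Measure X, R ∈ M → IsProbabilityMeasure R →
      ∫ x, h (T x) ∂(R) = (R A).toReal := by
    intro R hR hRprob
    have hint : Integrable (A.indicator (fun _ => (1 : ℝ))) R :=
      (integrable_const (1 : ℝ)).indicator hA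
    calc ∫ x, h (T x) ∂(R)
        = ∫ x, MeasureTheory.condExp (MeasurableSpace.comap T ‹MeasurableSpace Y›) R (A.indicator (fun _ => (1 : ℝ))) x ∂(R) :=
          integral_congr_ae (by exact hh R hR)
      _ = ∫ x, A.indicator (fun _ => (1 : ℝ)) x ∂(R) := integral_condExp hT.comap_le
      _ = (R A).toReal := by
          rw [integral_indicator_const _ hA]; simp [Measure.real]
  have h1 : ∫ x, h (T x) ∂P = ∫ y, h y ∂(Measure.map T P) :=
    (integral_map hT.aemeasurable hmeas.aestronglyMeasurable).symm
  have h2 : ∫ x, h (T x) ∂Q = ∫ y, h y ∂(Measure.map T Q) :=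
    (integral_map hT.aemeasurable hmeas.aestronglyMeasurable).symm
  have : (P A).toReal = (Q A).toReal := by
    rw [← key P hP hPprob, ← key Q hQ hQprob, h1, h2, hmap]
  exact (ENNReal.toReal_eq_toReal_iff' (measure_ne_top P A) (measure_ne_top Q A)).mp this
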